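/- arXiv:2507.06757 — 5 statements merged into one kernel-verified Lean document; each statement's English description precedes it below -/
import Mathlib

section
/- Let v₁,…,v_d ∈ ℝ^D be linearly independent and for x ∈ ℝ^d let L_x = { n ∈ ℤ^D : v_k·n + x_k ≥ 0 for all k }. If (x(j)) is a sequence in ℝ^d such that for each k the sequence (x_k(j)) is either (i) non-increasing and convergent to x_k, (ii) strictly increasing and convergent to x_k, or (iii) increasing to +∞, then L_{x(j)} converges in the Fell topology (pointwise convergence of characteristic functions) to the set of all n ∈ ℤ^D satisfying v_k·n + x_k ≥ 0 for all k of type (i) and v_k·n + x_k > 0 for all k of type (ii) (no condition for k of type (iii)). -/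
open Filter
open scoped BigOperators

/-- `v · n` for `v ∈ ℝ^D` and `n ∈ ℤ^D`. -/
def dotZ {D : ℕ} (v : Fin D → ℝ) (n : Fin D → ℤ) : ℝ := ∑ i, v i * (n i : ℝ)

/-- Characteristic function of a set, with values in `Bool`. -/
noncomputable def chi {α : Type*} (M : Set α) : α → Bool :=
  fun x => @decide (x ∈ M) (Classical.propDecidable _)

/-- the convergence criterion for the half-space intersections
`L_x = {n ∈ ℤ^D : v_k·n + x_k ≥ 0 ∀k}` in the Fell topology, for a sequence
`x(j)` whose components are non-increasing to a limit (J₊), strictly increasing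
to a limit (J₋), or increasing to +∞ (J_∞). -/
theorem statement3 (D d : ℕ) (v : Fin d → Fin D → ℝ)
    (hv : LinearIndependent ℝ v)
    (x : ℕ → Fin d → ℝ) (xl : Fin d → ℝ)
    (Jp Jm Jinf : Set (Fin d))
    (hcover : Jp ∪ Jm ∪ Jinf = Set.univ)
    (hp : ∀ k ∈ Jp, Antitone (fun j => x j k) ∧
      Tendsto (fun j => x j k) atTop (nhds (xl k)))
    (hm : ∀ k ∈ Jm, StrictMono (fun j => x j k) ∧
      Tendsto (fun j => x j k) atTop (nhds (xl k)))
    (hi : ∀ k ∈ Jinf, Monotone (fun j => x j k) ∧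
      Tendsto (fun j => x j k) atTop atTop) :
    Tendsto
      (fun j => chi {n : Fin D → ℤ | ∀ k, 0 ≤ dotZ (v k) n + x j k})
      atTop
      (nhds (chi {n : Fin D → ℤ |
        (∀ k ∈ Jp, 0 ≤ dotZ (v k) n + xl k) ∧
        (∀ k ∈ Jm, 0 < dotZ (v k) n + xl k)})) := by
  rw [tendsto_pi_nhds]
  intro n
  set c : Fin d → ℝ := fun k => dotZ (v k) n with hc
  -- key facts
  have hple : ∀ k ∈ Jp, ∀ j, xl k ≤ x j k := by
    intro k hk j
    exact le_of_tendsto (hp k hk).2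
      (eventually_atTop.2 ⟨j, fun m hmj => (hp k hk).1 hmj⟩)
  have hmle : ∀ k ∈ Jm, ∀ j, x j k < xl k := by
    intro k hk j
    have h1 : x (j+1) k ≤ xl k :=
      ge_of_tendsto (hm k hk).2
        (eventually_atTop.2 ⟨j+1, fun m hmj => (hm k hk).1.monotone hmj⟩)
    exact lt_of_lt_of_le ((hm k hk).1 (Nat.lt_succ_self j)) h1
  have hmem : ∀ᶠ j in atTop,
      ((∀ k, 0 ≤ c k + x j k) ↔
       ((∀ k ∈ Jp, 0 ≤ c k + xl k) ∧ (∀ k ∈ Jm, 0 < c k + xl k))) := by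
    by_cases hP : (∀ k ∈ Jp, 0 ≤ c k + xl k) ∧ (∀ k ∈ Jm, 0 < c k + xl k)
    · have hall : ∀ᶠ j in atTop, ∀ k, 0 ≤ c k + x j k := by
        rw [eventually_all]
        intro k
        have hk : k ∈ Jp ∪ Jm ∪ Jinf := by rw [hcover]; exact Set.mem_univ k
        rcases hk with (hk | hk) | hk
        · exact Eventually.of_forall fun j =>
            le_trans (hP.1 k hk) (by linarith [hple k hk j])
        · have h1 : ∀ᶠ j in atTop, -c k < x j k :=
            (hm k hk).2.eventually (eventually_gt_nhds (by linarith [hP.2 k hk]))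
          filter_upwards [h1] with j hj
          linarith
        · have h1 : ∀ᶠ j in atTop, -c k ≤ x j k :=
            (hi k hk).2.eventually_ge_atTop (-c k)
          filter_upwards [h1] with j hj
          linarith
      filter_upwards [hall] with j hj
      exact iff_of_true hj hP
    · -- negation: some k in Jp with c k + xl k < 0, or some k in Jm with c k + xl k ≤ 0
      have hneg : (∃ k ∈ Jp, c k + xl k < 0) ∨ (∃ k ∈ Jm, c k + xl k ≤ 0) := by
        by_contra h
        push_neg at h
        exact hP ⟨h.1, h.2⟩
      have hfail : ∀ᶠ j in atTop, ¬ (∀ k, 0 ≤ c k + x j k) := by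
        rcases hneg with ⟨k, hk, hlt⟩ | ⟨k, hk, hle⟩
        · have h1 : ∀ᶠ j in atTop, x j k < -c k :=
            (hp k hk).2.eventually (eventually_lt_nhds (by linarith))
          filter_upwards [h1] with j hj hall
          have := hall k
          linarith
        · refine Eventually.of_forall fun j hall => ?_
          have := hall k
          have := hmle k hk j
          linarith
      filter_upwards [hfail] with j hj
      exact iff_of_false hj hP
  refine Tendsto.congr' ?_ tendsto_const_nhds
  filter_upwards [hmem] with j hj
  show chi _ n = chi _ n
  simp only [chi]
  exact decide_eq_decide.mpr hj.symm
end

section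
/- Let v₁,…,v_d ∈ ℝ^D (d ≤ D) be such that the image A_v(ℤ^D) of ℤ^D under the linear map A_v(z) = (v₁·z,…,v_d·z) is dense in ℝ^d. Define Γ on the collection of sets of the form L^J_{v,x} = { n ∈ ℤ^D : v_k·n + x_k > 0 for k ∈ J, v_k·n + x_k ≥ 0 for k ∉ J } (x ∈ ℝ^d₊, J ⊆ {1,…,d}) by Γ(S)_k = −inf{ v_k·n : n ∈ S }. Then Γ(L^J_{v,x}) = x for every J and every x ∈ ℝ^d₊. -/
open scoped BigOperators

/-- The set `L^J_{v,x} = {n ∈ ℤ^D : v_k·n + x_k > 0 for k ∈ J,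
v_k·n + x_k ≥ 0 for k ∉ J}`. -/
def LJ {D d : ℕ} (v : Fin d → Fin D → ℝ) (x : Fin d → ℝ) (J : Set (Fin d)) :
    Set (Fin D → ℤ) :=
  {n | (∀ k ∈ J, 0 < dotZ (v k) n + x k) ∧ (∀ k ∉ J, 0 ≤ dotZ (v k) n + x k)}

/-- if `A_v(ℤ^D)` is dense in `ℝ^d`, then for every `J` and
`x ∈ ℝ^d₊` one has `Γ(L^J_{v,x})_k = x_k`, i.e.
`inf { v_k·n : n ∈ L^J_{v,x} } = −x_k`. -/
theorem statement6 (D d : ℕ) (v : Fin d → Fin D → ℝ)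
    (hdense : Dense (Set.range fun n : Fin D → ℤ => fun k => dotZ (v k) n))
    (J : Set (Fin d)) (x : Fin d → ℝ) (hx : ∀ k, 0 ≤ x k) (k : Fin d) :
    sInf { r : ℝ | ∃ n ∈ LJ v x J, r = dotZ (v k) n } = -x k := by
  set S := { r : ℝ | ∃ n ∈ LJ v x J, r = dotZ (v k) n } with hS
  have hlb : ∀ r ∈ S, -x k ≤ r := by
    rintro r ⟨n, ⟨h1, h2⟩, rfl⟩
    by_cases hk : k ∈ J
    · linarith [h1 k hk]
    · linarith [h2 k hk]
  have key : ∀ ε : ℝ, 0 < ε → ∃ n ∈ LJ v x J, dotZ (v k) n < -x k + ε := by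
    intro ε hε
    have hy := hdense (fun j => -x j + ε / 2)
    rw [Metric.mem_closure_iff] at hy
    obtain ⟨p, hp, hd⟩ := hy (ε / 4) (by positivity)
    obtain ⟨n, rfl⟩ := hp
    rw [dist_pi_lt_iff (by positivity)] at hd
    have hclose : ∀ j, |(-x j + ε / 2) - dotZ (v j) n| < ε / 4 := fun j => hd j
    refine ⟨n, ⟨?_, ?_⟩, ?_⟩
    · intro j _
      have := abs_lt.mp (hclose j)
      linarith [this.1, this.2]
    · intro j _
      have := abs_lt.mp (hclose j)
      linarith [this.1, this.2]
    · have := abs_lt.mp (hclose k)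
      linarith [this.1, this.2]
  have hbdd : BddBelow S := ⟨-x k, hlb⟩
  have hne : S.Nonempty := by
    obtain ⟨n, hn, _⟩ := key 1 one_pos
    exact ⟨dotZ (v k) n, n, hn, rfl⟩
  refine le_antisymm ?_ (le_csInf hne hlb)
  refine le_of_forall_pos_le_add fun ε hε => ?_
  obtain ⟨n, hn, hlt⟩ := key ε hε
  exact le_trans (csInf_le hbdd ⟨n, hn, rfl⟩) hlt.le
end

section
/- Let v₁,…,v_d ∈ ℝ^D with A_v(ℤ^D) dense in ℝ^d. Suppose a sequence of sets L^{J(j)}_{v,x(j)} (with x(j) ∈ ℝ^d₊) converges in the Fell topology to L^J_{v,x} with x ∈ ℝ^d₊. Then x(j) → x in ℝ^d. -/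
open Filter
open scoped BigOperators

/-- if `A_v(ℤ^D)` is dense in `ℝ^d` and `L^{J(j)}_{v,x(j)}`
converges in the Fell topology (pointwise convergence of characteristic
functions) to `L^J_{v,x}` with all `x(j), x ∈ ℝ^d₊`, then `x(j) → x`. -/
theorem statement7 (D d : ℕ) (v : Fin d → Fin D → ℝ)
    (hdense : Dense (Set.range fun n : Fin D → ℤ => fun k => dotZ (v k) n))
    (x : ℕ → Fin d → ℝ) (J : ℕ → Set (Fin d))
    (xl : Fin d → ℝ) (Jl : Set (Fin d))
    (hx : ∀ j k, 0 ≤ x j k) (hxl : ∀ k, 0 ≤ xl k)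
    (hconv : Tendsto (fun j => chi (LJ v (x j) (J j))) atTop
      (nhds (chi (LJ v xl Jl)))) :
    Tendsto x atTop (nhds xl) := by
  classical
  -- pointwise convergence of membership
  have hchi : ∀ n : Fin D → ℤ, ∀ᶠ j in atTop,
      ((n ∈ LJ v (x j) (J j)) ↔ n ∈ LJ v xl Jl) := by
    intro n
    have h : Tendsto (fun j => chi (LJ v (x j) (J j)) n) atTop
        (nhds (chi (LJ v xl Jl) n)) := (tendsto_pi_nhds.mp hconv) n
    rw [nhds_discrete, tendsto_pure] at h
    filter_upwards [h] with j hj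
    simpa only [chi, decide_eq_decide] using hj
  -- density helper
  have hden : ∀ (t : Fin d → ℝ) (δ : ℝ), 0 < δ →
      ∃ n : Fin D → ℤ, ∀ i, |dotZ (v i) n - t i| < δ := by
    intro t δ hδ
    obtain ⟨n, hn⟩ := DenseRange.exists_dist_lt hdense t hδ
    refine ⟨n, fun i => ?_⟩
    have := (dist_pi_lt_iff hδ).mp hn i
    rw [Real.dist_eq, abs_sub_comm] at this
    exact this
  rw [Metric.tendsto_nhds]
  intro ε hε
  -- lower-bound point
  obtain ⟨n₀, hn₀⟩ := hden (fun i => ε / 2 - xl i) (ε / 4) (by linarith)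
  have hpos : ∀ i, ε / 4 < dotZ (v i) n₀ + xl i ∧ dotZ (v i) n₀ + xl i < 3 * ε / 4 := by
    intro i
    have h := abs_sub_lt_iff.mp (hn₀ i)
    constructor <;> linarith [h.1, h.2]
  have hmem0 : n₀ ∈ LJ v xl Jl :=
    ⟨fun k _ => by linarith [(hpos k).1], fun k _ => by linarith [(hpos k).1]⟩
  have hevA : ∀ᶠ j in atTop, ∀ i, xl i - 3 * ε / 4 < x j i := by
    filter_upwards [hchi n₀] with j hj i
    have hmem : n₀ ∈ LJ v (x j) (J j) := hj.mpr hmem0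
    have h0 : 0 ≤ dotZ (v i) n₀ + x j i := by
      by_cases hi : i ∈ J j
      · exact le_of_lt (hmem.1 i hi)
      · exact hmem.2 i hi
    linarith [(hpos i).2]
  -- upper-bound points, one per coordinate
  choose nk hnk using fun k : Fin d =>
    hden (fun i => if i = k then -(xl k) - ε / 2 else ε - xl i) (ε / 8) (by linarith)
  have hkk : ∀ k, dotZ (v k) (nk k) + xl k < -(3 * ε / 8) ∧
      -(5 * ε / 8) < dotZ (v k) (nk k) + xl k := by
    intro k
    have h := abs_sub_lt_iff.mp (hnk k k)
    simp only [eq_self_iff_true, if_true] at h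
    constructor <;> linarith [h.1, h.2]
  have hki : ∀ k i, i ≠ k → 7 * ε / 8 - xl i < dotZ (v i) (nk k) := by
    intro k i hik
    have h := abs_sub_lt_iff.mp (hnk k i)
    simp only [if_neg hik] at h
    linarith [h.1, h.2]
  have hnotmem : ∀ k, nk k ∉ LJ v xl Jl := by
    intro k hmem
    have h0 : 0 ≤ dotZ (v k) (nk k) + xl k := by
      by_cases hk : k ∈ Jl
      · exact le_of_lt (hmem.1 k hk)
      · exact hmem.2 k hk
    linarith [(hkk k).1]
  have hevB : ∀ᶠ j in atTop, ∀ k, nk k ∉ LJ v (x j) (J j) := by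
    rw [eventually_all]
    intro k
    filter_upwards [hchi (nk k)] with j hj hmem
    exact hnotmem k (hj.mp hmem)
  filter_upwards [hevA, hevB] with j hA hB
  rw [dist_pi_lt_iff hε]
  intro k
  rw [Real.dist_eq, abs_sub_lt_iff]
  have hk1 : dotZ (v k) (nk k) + x j k ≤ 0 := by
    by_contra hcon
    push_neg at hcon
    apply hB k
    have hposi : ∀ i, 0 < dotZ (v i) (nk k) + x j i := by
      intro i
      by_cases hik : i = k
      · subst hik; exact hcon
      · have h1 := hki k i hik
        have h2 := hA i
        linarith
    exact ⟨fun i _ => hposi i, fun i _ => le_of_lt (hposi i)⟩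
  constructor
  · -- x j k - xl k < ε
    have := (hkk k).2
    linarith
  · -- xl k - x j k < ε
    have := hA k
    linarith
end

section
/- Let v₁,…,v_d ∈ ℝ^D span a subspace E whose orthogonal complement meets ℤ^D in a lattice, and assume A_{v∖i}(ℤ^D) has rank structure so that the integer kernel of A_{v∖i} (the map omitting row i) has ℤ-rank one more than the integer kernel of A_v. Then there exists a nonzero n ∈ ℤ^D with v_k·n = 0 for all k ≠ i and v_i·n > 0; consequently the sequence n(j) = j·n lies in L_v, satisfies v_k·n(j) = 0 for all k ≠ i, and v_i·n(j) → +∞. -/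
open Filter
open scoped BigOperators

/-- Embedding `ℤ^D → ℝ^D`. -/
def castZ {D : ℕ} (n : Fin D → ℤ) : Fin D → ℝ := fun i => (n i : ℝ)

/-- in the rational case, if the integer kernel of `A_{v∖i}`
has rank one more than the integer kernel of `A_v` (measured via the dimension
of their real spans), then there is a nonzero `n ∈ ℤ^D` with `v_k·n = 0` for
`k ≠ i` and `v_i·n > 0`; the sequence `n(j) = j·n` then lies in `L_v`,
satisfies `v_k·n(j) = 0` for `k ≠ i` and `v_i·n(j) → +∞`. -/
theorem statement10 (D d : ℕ) (v : Fin d → Fin D → ℝ)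
    (hv : LinearIndependent ℝ v) (i : Fin d)
    (hrank :
      Module.finrank ℝ (Submodule.span ℝ
        {x : Fin D → ℝ | ∃ n : Fin D → ℤ, x = castZ n ∧
          ∀ k, k ≠ i → dotZ (v k) n = 0}) =
      Module.finrank ℝ (Submodule.span ℝ
        {x : Fin D → ℝ | ∃ n : Fin D → ℤ, x = castZ n ∧
          ∀ k, dotZ (v k) n = 0}) + 1) :
    ∃ n : Fin D → ℤ, n ≠ 0 ∧ (∀ k, k ≠ i → dotZ (v k) n = 0) ∧
      0 < dotZ (v i) n ∧
      (∀ j : ℕ, ∀ k, 0 ≤ dotZ (v k) ((j : ℤ) • n)) ∧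
      (∀ j : ℕ, ∀ k, k ≠ i → dotZ (v k) ((j : ℤ) • n) = 0) ∧
      Tendsto (fun j : ℕ => dotZ (v i) ((j : ℤ) • n)) atTop atTop := by
  -- first find m with ∀ k ≠ i, dot = 0 and dot (v i) m ≠ 0
  have key : ∃ m : Fin D → ℤ, (∀ k, k ≠ i → dotZ (v k) m = 0) ∧ dotZ (v i) m ≠ 0 := by
    by_contra h
    push_neg at h
    have hsets : {x : Fin D → ℝ | ∃ n : Fin D → ℤ, x = castZ n ∧
          ∀ k, k ≠ i → dotZ (v k) n = 0} =
        {x : Fin D → ℝ | ∃ n : Fin D → ℤ, x = castZ n ∧ ∀ k, dotZ (v k) n = 0} := by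
      ext x
      constructor
      · rintro ⟨n, rfl, hn⟩
        refine ⟨n, rfl, fun k => ?_⟩
        by_cases hk : k = i
        · subst hk; exact h n hn
        · exact hn k hk
      · rintro ⟨n, rfl, hn⟩
        exact ⟨n, rfl, fun k _ => hn k⟩
    rw [hsets] at hrank
    omega
  obtain ⟨m, hm0, hmi⟩ := key
  -- choose sign
  obtain ⟨n, hn0, hni⟩ : ∃ n : Fin D → ℤ, (∀ k, k ≠ i → dotZ (v k) n = 0) ∧
      0 < dotZ (v i) n := by
    rcases hmi.lt_or_gt with hlt | hgt
    · refine ⟨-m, fun k hk => ?_, ?_⟩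
      · simp [dotZ] at hm0 ⊢
        simpa [mul_comm, neg_mul, Finset.sum_neg_distrib] using
          congrArg Neg.neg (hm0 k hk)
      · have : dotZ (v i) (-m) = -dotZ (v i) m := by
          simp [dotZ, Finset.sum_neg_distrib]
        rw [this]; linarith
    · exact ⟨m, hm0, hgt⟩
  have hscale : ∀ (w : Fin D → ℝ) (c : ℤ), dotZ w (c • n) = (c : ℝ) * dotZ w n := by
    intro w c
    simp only [dotZ, Finset.mul_sum]
    refine Finset.sum_congr rfl fun j _ => ?_
    simp [Pi.smul_apply]
    push_cast
    ring
  refine ⟨n, ?_, hn0, hni, ?_, ?_, ?_⟩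
  · intro h
    rw [h] at hni
    simp [dotZ] at hni
  · intro j k
    by_cases hk : k = i
    · subst hk
      rw [hscale]
      positivity
    · rw [hscale, hn0 k hk, mul_zero]
  · intro j k hk
    rw [hscale, hn0 k hk, mul_zero]
  · simp only [hscale]
    exact (tendsto_natCast_atTop_atTop).atTop_mul_const hni
end

section
/- Let Γ : X → Y be a continuous map between topological spaces, with X a Polish space and Y = ℝ^d₊, and suppose there is a Borel set N ⊆ Y of measure zero (for a given Radon measure ν on Y absolutely continuous w.r.t. Lebesgue) such that Γ restricted to X ∖ Γ^{-1}(N) is injective and Γ is proper. Then A ↦ ν(Γ(A)) defines a countably additive Borel measure on X which is a Radon measure. -/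
open MeasureTheory

/-- let `Γ : X → ℝ^d₊` be a continuous proper map on a Polish
space `X`, `ν` a Radon measure on `ℝ^d` absolutely continuous w.r.t. Lebesgue
measure, and suppose `Γ` is injective outside the preimage of a `ν`-null Borel
set `N`.  Then `A ↦ ν(Γ(A))` defines a (countably additive) Borel measure on
`X` which is a Radon measure. -/
theorem statement17 (d : ℕ) (X : Type*) [TopologicalSpace X] [PolishSpace X]
    [MeasurableSpace X] [BorelSpace X]
    (Γ : X → (Fin d → ℝ)) (hΓcont : Continuous Γ)
    (hΓpos : ∀ z : X, ∀ i, 0 ≤ Γ z i)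
    (hΓproper : ∀ K : Set (Fin d → ℝ), IsCompact K → IsCompact (Γ ⁻¹' K))
    (ν : Measure (Fin d → ℝ)) [ν.Regular] (hac : ν ≪ volume)
    (N : Set (Fin d → ℝ)) (hNmeas : MeasurableSet N) (hNnull : ν N = 0)
    (hinj : Set.InjOn Γ (Γ ⁻¹' N)ᶜ) :
    ∃ μ : Measure X,
      (∀ A : Set X, MeasurableSet A → μ A = ν (Γ '' A)) ∧ μ.Regular := by
  set S : Set X := (Γ ⁻¹' N)ᶜ with hS
  have hSmeas : MeasurableSet S := (hΓcont.measurable hNmeas).compl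
  -- measurability of images
  have himg : ∀ A : Set X, MeasurableSet A → MeasurableSet (Γ '' (A ∩ S)) := by
    intro A hA
    exact (hA.inter hSmeas).image_of_continuousOn_injOn hΓcont.continuousOn
      (hinj.mono Set.inter_subset_right)
  -- the measure
  set μ : Measure X := Measure.ofMeasurable (fun A _ => ν (Γ '' (A ∩ S)))
    (by simp) (by
      intro f hf hdisj
      have heq : Γ '' ((⋃ i, f i) ∩ S) = ⋃ i, Γ '' (f i ∩ S) := by
        rw [Set.iUnion_inter, Set.image_iUnion]
      rw [heq]
      refine measure_iUnion ?_ (fun i => himg _ (hf i))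
      intro i j hij
      simp only [Function.onFun]
      rw [Set.disjoint_left]
      rintro y ⟨a, ⟨haf, haS⟩, rfl⟩ ⟨b, ⟨hbf, hbS⟩, hba⟩
      have : b = a := hinj hbS haS hba
      subst this
      exact Set.disjoint_left.1 (hdisj hij) haf hbf) with hμ
  have hμapp : ∀ A : Set X, MeasurableSet A → μ A = ν (Γ '' (A ∩ S)) := by
    intro A hA
    rw [hμ, Measure.ofMeasurable_apply _ hA]
  have key : ∀ A : Set X, MeasurableSet A → μ A = ν (Γ '' A) := by
    intro A hA
    rw [hμapp A hA]
    refine le_antisymm (measure_mono (Set.image_mono Set.inter_subset_left)) ?_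
    have hsub : Γ '' A ⊆ Γ '' (A ∩ S) ∪ N := by
      rintro y ⟨a, haA, rfl⟩
      by_cases haS : a ∈ S
      · exact Or.inl ⟨a, ⟨haA, haS⟩, rfl⟩
      · exact Or.inr (by simpa [hS] using haS)
    calc ν (Γ '' A) ≤ ν (Γ '' (A ∩ S) ∪ N) := measure_mono hsub
      _ ≤ ν (Γ '' (A ∩ S)) + ν N := measure_union_le _ _
      _ = ν (Γ '' (A ∩ S)) := by rw [hNnull, add_zero]
  -- σ-compactness of X from properness
  haveI : SigmaCompactSpace X := by
    refine ⟨⟨fun n => Γ ⁻¹' Metric.closedBall 0 n,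
      fun n => hΓproper _ (isCompact_closedBall _ _), ?_⟩⟩
    ext x
    simp only [Set.mem_iUnion, Set.mem_preimage, Metric.mem_closedBall, Set.mem_univ, iff_true]
    obtain ⟨n, hn⟩ := exists_nat_ge (dist (Γ x) 0)
    exact ⟨n, hn⟩
  -- local finiteness of μ
  haveI : IsLocallyFiniteMeasure μ := by
    refine ⟨fun x => ⟨Γ ⁻¹' Metric.ball (Γ x) 1, ?_, ?_⟩⟩
    · exact (hΓcont.isOpen_preimage _ Metric.isOpen_ball).mem_nhds (by simp)
    · have h1 : μ (Γ ⁻¹' Metric.ball (Γ x) 1) ≤ μ (Γ ⁻¹' Metric.closedBall (Γ x) 1) :=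
        measure_mono (Set.preimage_mono Metric.ball_subset_closedBall)
      have h2 : μ (Γ ⁻¹' Metric.closedBall (Γ x) 1)
          = ν (Γ '' ((Γ ⁻¹' Metric.closedBall (Γ x) 1) ∩ S)) :=
        hμapp _ ((hΓcont.measurable measurableSet_closedBall))
      have h3 : ν (Γ '' ((Γ ⁻¹' Metric.closedBall (Γ x) 1) ∩ S))
          ≤ ν (Metric.closedBall (Γ x) 1) := by
        refine measure_mono ?_
        rintro y ⟨a, ⟨ha, _⟩, rfl⟩
        exact ha
      have h4 : ν (Metric.closedBall (Γ x) 1) < ⊤ :=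
        (isCompact_closedBall _ _).measure_lt_top
      exact lt_of_le_of_lt (h1.trans (h2.le.trans h3)) h4
  exact ⟨μ, key, inferInstance⟩
end
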